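/- There is an absolute constant c such that for all natural numbers n ≥ 1, b ≥ 2, and k ≥ 1, every function f : ({0,1}^n) × ({0,1}^n) → {0,1} that admits a (b, k) bit-probe scheme is computed by a Boolean circuit with 2n inputs of size at most c · (2^n · k · log₂ b + 2^n · b + 2^k · 2^n). -/

import Mathlib

inductive GateLabel where
  | and | or | not
deriving DecidableEq

/-- A Boolean circuit with `m` inputs: a sequence of gates, each labeled ∧, ∨ (fan-in 2)
or ¬ (fan-in 1), taking inputs from among the `m` input variables and earlier gates
(wire `w < m` is input variable `w`; wire `m + g` is gate `g`); one gate is the output gate. -/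
structure Circuit (m : ℕ) where
  size : ℕ
  label : Fin size → GateLabel
  in1 : (g : Fin size) → Fin (m + g.val)
  in2 : (g : Fin size) → Fin (m + g.val)
  out : Fin size

namespace Circuit

/-- The value carried on wire `w` when the circuit is evaluated on input `x`. -/
def wire {m : ℕ} (C : Circuit m) (x : Fin m → Bool) (w : ℕ) (hw : w < m + C.size) : Bool :=
  if h : w < m then x ⟨w, h⟩
  else
    have hg : w - m < C.size := by omega
    have h1 : ((C.in1 ⟨w - m, hg⟩ : Fin _) : ℕ) < w := by
      have := (C.in1 ⟨w - m, hg⟩).isLt; simp only [Fin.val_mk] at this; omega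
    have h2 : ((C.in2 ⟨w - m, hg⟩ : Fin _) : ℕ) < w := by
      have := (C.in2 ⟨w - m, hg⟩).isLt; simp only [Fin.val_mk] at this; omega
    match C.label ⟨w - m, hg⟩ with
    | .not => !(C.wire x (C.in1 ⟨w - m, hg⟩) (by omega))
    | .and => (C.wire x (C.in1 ⟨w - m, hg⟩) (by omega)) && (C.wire x (C.in2 ⟨w - m, hg⟩) (by omega))
    | .or => (C.wire x (C.in1 ⟨w - m, hg⟩) (by omega)) || (C.wire x (C.in2 ⟨w - m, hg⟩) (by omega))
termination_by w

/-- The output of the circuit on input `x`. -/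
def eval {m : ℕ} (C : Circuit m) (x : Fin m → Bool) : Bool :=
  C.wire x (m + C.out.val) (by omega)

end Circuit

/-- A `(b, k)` bit-probe scheme for `f : {0,1}^n × {0,1}^n → {0,1}`: an encoding
`G : {0,1}^n → {0,1}^b`, a probe map `H` assigning to each query `y` a list of `k`
positions in the encoding, and a decoder `φ`, such that for all `x, y`, `f (x, y)` equals
`φ` applied to the `k` probed bits of `G x` (at positions `H y`) and the query `y`. -/
def HasProbeScheme {n : ℕ} (b k : ℕ) (f : (Fin n → Bool) × (Fin n → Bool) → Bool) : Prop :=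
  ∃ (G : (Fin n → Bool) → (Fin b → Bool)) (H : (Fin n → Bool) → (Fin k → Fin b))
    (φ : (Fin k → Bool) → (Fin n → Bool) → Bool),
    ∀ x y : Fin n → Bool, f (x, y) = φ (fun j => G x (H y j)) y

/-- The `2n`-bit input obtained by concatenating `x` and `y`. -/
def joinInput {n : ℕ} (x y : Fin n → Bool) : Fin (2 * n) → Bool := fun i =>
  if h : (i : ℕ) < n then x ⟨i, h⟩ else y ⟨(i : ℕ) - n, by have := i.isLt; omega⟩

namespace PS

structure Net (m : ℕ) where
  size : ℕ
  gate : ℕ → GateLabel × ℕ × ℕ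

def Net.Valid {m : ℕ} (N : Net m) : Prop :=
  ∀ g < N.size, (N.gate g).2.1 < m + g ∧ (N.gate g).2.2 < m + g

def Net.wire {m : ℕ} (N : Net m) (x : Fin m → Bool) (w : ℕ) : Bool :=
  if h : w < m then x ⟨w, h⟩
  else
    if h1 : (N.gate (w - m)).2.1 < w ∧ (N.gate (w - m)).2.2 < w then
      match (N.gate (w - m)).1 with
      | .not => !(N.wire x (N.gate (w - m)).2.1)
      | .and => (N.wire x (N.gate (w - m)).2.1) && (N.wire x (N.gate (w - m)).2.2)
      | .or => (N.wire x (N.gate (w - m)).2.1) || (N.wire x (N.gate (w - m)).2.2)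
    else false
termination_by w
decreasing_by all_goals omega

lemma Net.wire_input {m : ℕ} (N : Net m) (x : Fin m → Bool) (w : ℕ) (h : w < m) :
    N.wire x w = x ⟨w, h⟩ := by
  rw [Net.wire.eq_def]; simp [h]

end PS

namespace PS

def gle (l : GateLabel) (a b : Bool) : Bool :=
  match l with
  | .not => !a
  | .and => a && b
  | .or => a || b

lemma Net.wire_gate {m : ℕ} (N : Net m) (x : Fin m → Bool) (w : ℕ) (h : m ≤ w)
    (h1 : (N.gate (w - m)).2.1 < w) (h2 : (N.gate (w - m)).2.2 < w) :
    N.wire x w = gle (N.gate (w - m)).1 (N.wire x (N.gate (w - m)).2.1)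
      (N.wire x (N.gate (w - m)).2.2) := by
  rw [Net.wire.eq_def]
  have : ¬ w < m := by omega
  simp only [this, dif_neg, not_false_iff, h1, h2, and_true, true_and, dif_pos]
  cases (N.gate (w - m)).1 <;> rfl

def Net.push {m : ℕ} (N : Net m) (t : GateLabel × ℕ × ℕ) : Net m :=
  ⟨N.size + 1, fun g => if g = N.size then t else N.gate g⟩

def Extends {m : ℕ} (N N' : Net m) : Prop :=
  N.size ≤ N'.size ∧ ∀ g < N.size, N'.gate g = N.gate g

lemma Extends.refl {m : ℕ} (N : Net m) : Extends N N := ⟨le_rfl, fun _ _ => rfl⟩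

lemma Extends.trans {m : ℕ} {N1 N2 N3 : Net m} (h : Extends N1 N2) (h' : Extends N2 N3) :
    Extends N1 N3 :=
  ⟨h.1.trans h'.1, fun g hg => (h'.2 g (lt_of_lt_of_le hg h.1)).trans (h.2 g hg)⟩

lemma extends_push {m : ℕ} (N : Net m) (t : GateLabel × ℕ × ℕ) : Extends N (N.push t) := by
  refine ⟨Nat.le_succ _, fun g hg => ?_⟩
  simp [Net.push, Nat.ne_of_lt hg]

lemma valid_push {m : ℕ} {N : Net m} (hV : N.Valid) {l : GateLabel} {a b : ℕ}
    (h1 : a < m + N.size) (h2 : b < m + N.size) : (N.push (l, a, b)).Valid := by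
  intro g hg
  simp only [Net.push] at hg ⊢
  rcases Nat.lt_succ_iff_lt_or_eq.mp hg with h | h
  · simpa [Nat.ne_of_lt h] using hV g h
  · subst h; simpa using ⟨h1, h2⟩

lemma wire_extends {m : ℕ} {N N' : Net m} (h : Extends N N') (x : Fin m → Bool) :
    ∀ w, w < m + N.size → N'.wire x w = N.wire x w := by
  intro w
  induction w using Nat.strong_induction_on with
  | _ w ih =>
    intro hw
    by_cases hm : w < m
    · rw [Net.wire_input N x w hm, Net.wire_input N' x w hm]
    · have hg : w - m < N.size := by omega
      have hgate : N'.gate (w - m) = N.gate (w - m) := h.2 _ hg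
      conv_lhs => rw [Net.wire.eq_def]
      conv_rhs => rw [Net.wire.eq_def]
      simp only [hm, dif_neg, not_false_iff, hgate]
      split
      · rename_i h1
        have e1 : N'.wire x (N.gate (w - m)).2.1 = N.wire x (N.gate (w - m)).2.1 :=
          ih _ h1.1 (by omega)
        have e2 : N'.wire x (N.gate (w - m)).2.2 = N.wire x (N.gate (w - m)).2.2 :=
          ih _ h1.2 (by omega)
        cases (N.gate (w - m)).1 <;> simp only [e1, e2]
      · rfl

lemma wire_push_new {m : ℕ} (N : Net m) (l : GateLabel) (a b : ℕ)
    (h1 : a < m + N.size) (h2 : b < m + N.size) (x : Fin m → Bool) :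
    (N.push (l, a, b)).wire x (m + N.size) = gle l (N.wire x a) (N.wire x b) := by
  have hgate : (N.push (l, a, b)).gate (m + N.size - m) = (l, a, b) := by simp [Net.push]
  rw [Net.wire_gate (N.push (l, a, b)) x (m + N.size) (by omega) (by rw [hgate]; exact h1)
    (by rw [hgate]; exact h2), hgate]
  rw [wire_extends (extends_push N (l, a, b)) x _ h1,
    wire_extends (extends_push N (l, a, b)) x _ h2]

end PS

namespace PS

lemma select {m : ℕ} (sel : List ℕ) :
    ∀ (N : Net m), N.Valid → (∀ w ∈ sel, w < m + N.size) →
      ∀ (L : (Fin sel.length → Bool) → ℕ), (∀ v, L v < m + N.size) →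
      ∃ (N' : Net m) (o : ℕ), N'.Valid ∧ Extends N N' ∧
        N'.size + 4 ≤ N.size + 4 * 2 ^ sel.length ∧ o < m + N'.size ∧
        ∀ x, N'.wire x o = N.wire x (L (fun i => N.wire x (sel.get i))) := by
  induction sel with
  | nil =>
    intro N hV _ L hL
    refine ⟨N, L (fun i => i.elim0), hV, Extends.refl N, by simp, hL _, fun x => ?_⟩
    have : (fun i : Fin ([] : List ℕ).length => N.wire x (List.get [] i))
        = (fun i : Fin 0 => i.elim0) := funext fun i => i.elim0
    rw [this]
    exact rfl
  | cons s rest ih =>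
    intro N hV hsel L hL
    obtain ⟨N1, o0, hV1, ext1, sz1, ho0, spec0⟩ :=
      ih N hV (fun w hw => hsel w (List.mem_cons_of_mem _ hw))
        (fun v => L (Fin.cons false v)) (fun v => hL _)
    obtain ⟨N2, o1, hV2, ext2, sz2, ho1, spec1⟩ :=
      ih N1 hV1 (fun w hw => lt_of_lt_of_le (hsel w (List.mem_cons_of_mem _ hw))
          (by have := ext1.1; omega))
        (fun v => L (Fin.cons true v))
        (fun v => lt_of_lt_of_le (hL _) (by have := ext1.1; omega))
    have ext12 : Extends N N2 := ext1.trans ext2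
    have hs : s < m + N.size := hsel s List.mem_cons_self
    have hsizes : N.size ≤ N2.size := ext12.1
    have hs2 : s < m + N2.size := by omega
    have ho0' : o0 < m + N2.size := lt_of_lt_of_le ho0 (by have := ext2.1; omega)
    -- push 4 gates
    set P1 := N2.push (.not, s, s) with hP1
    set P2 := P1.push (.and, m + N2.size, o0) with hP2
    set P3 := P2.push (.and, s, o1) with hP3
    set N3 := P3.push (.or, m + N2.size + 1, m + N2.size + 2) with hN3
    have sP1 : P1.size = N2.size + 1 := rfl
    have sP2 : P2.size = N2.size + 2 := rfl
    have sP3 : P3.size = N2.size + 3 := rfl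
    have sN3 : N3.size = N2.size + 4 := rfl
    have hVP1 : P1.Valid := valid_push hV2 hs2 hs2
    have hVP2 : P2.Valid := valid_push hVP1 (by omega) (by omega)
    have hVP3 : P3.Valid := valid_push hVP2 (by omega) (by omega)
    have hVN3 : N3.Valid := valid_push hVP3 (by omega) (by omega)
    have e1 : Extends N2 P1 := extends_push _ _
    have e2 : Extends P1 P2 := extends_push _ _
    have e3 : Extends P2 P3 := extends_push _ _
    have e4 : Extends P3 N3 := extends_push _ _
    refine ⟨N3, m + N2.size + 3, hVN3, ext12.trans ((e1.trans e2).trans (e3.trans e4)),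
      ?_, by omega, fun x => ?_⟩
    · have : 2 ^ (s :: rest).length = 2 * 2 ^ rest.length := by
        rw [List.length_cons, pow_succ]; ring
      omega
    · -- values
      set c := N.wire x s with hc
      set vec := fun i : Fin rest.length => N.wire x (rest.get i) with hvec
      have hu0 : N2.wire x o0 = N.wire x (L (Fin.cons false vec)) := by
        rw [wire_extends ext2 x o0 ho0, spec0]
      have harg : (fun i : Fin rest.length => N1.wire x (rest.get i)) = vec := by
        funext i
        exact wire_extends ext1 x _
          (hsel _ (List.mem_cons_of_mem _ (by simpa using List.get_mem rest i.1 i.2)))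
      have hu1 : N2.wire x o1 = N.wire x (L (Fin.cons true vec)) := by
        rw [spec1, harg]
        exact wire_extends ext1 x _ (hL _)
      have hcs : N2.wire x s = c := wire_extends ext12 x s hs
      have w1 : P1.wire x (m + N2.size) = (!c) := by
        rw [hP1, wire_push_new N2 .not s s hs2 hs2 x, hcs]; rfl
      have w2 : P2.wire x (m + N2.size + 1) = ((!c) && N2.wire x o0) := by
        have h := wire_push_new P1 .and (m + N2.size) o0 (by omega) (by omega) x
        rw [sP1, ← Nat.add_assoc] at h
        rw [← hP2] at h
        rw [h, w1, wire_extends e1 x o0 ho0']; rfl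
      have w3 : P3.wire x (m + N2.size + 2) = (c && N2.wire x o1) := by
        have h := wire_push_new P2 .and s o1 (by omega) (by omega) x
        rw [sP2, ← Nat.add_assoc] at h
        rw [← hP3] at h
        rw [h, wire_extends (e1.trans e2) x s hs2, wire_extends (e1.trans e2) x o1 ho1, hcs]
        rfl
      have w2' : P3.wire x (m + N2.size + 1) = ((!c) && N2.wire x o0) := by
        rw [wire_extends e3 x _ (by omega), w2]
      have w4 : N3.wire x (m + N2.size + 3)
          = ((P3.wire x (m + N2.size + 1)) || (P3.wire x (m + N2.size + 2))) := by
        have h := wire_push_new P3 .or (m + N2.size + 1) (m + N2.size + 2)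
          (by omega) (by omega) x
        rw [sP3, ← Nat.add_assoc] at h
        rw [← hN3] at h
        rw [h]; rfl
      rw [w4, w2', w3, hu0, hu1]
      have hvec' : (fun i : Fin (s :: rest).length => N.wire x ((s :: rest).get i))
          = Fin.cons c vec := by
        funext i
        refine Fin.cases ?_ (fun j => ?_) i
        · rfl
        · rfl
      rw [hvec']
      cases hcv : c <;> simp [hcv]

end PS

namespace PS

lemma toCircuit {m : ℕ} (N : Net m) (hV : N.Valid) (g : ℕ) (hg : g < N.size) :
    ∃ C : Circuit m, C.size = N.size ∧ ∀ x, C.eval x = N.wire x (m + g) := by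
  refine ⟨⟨N.size, fun i => (N.gate i).1, fun i => ⟨(N.gate i).2.1, (hV i i.2).1⟩,
    fun i => ⟨(N.gate i).2.2, (hV i i.2).2⟩, ⟨g, hg⟩⟩, rfl, fun x => ?_⟩
  set C : Circuit m := ⟨N.size, fun i => (N.gate i).1, fun i => ⟨(N.gate i).2.1, (hV i i.2).1⟩,
    fun i => ⟨(N.gate i).2.2, (hV i i.2).2⟩, ⟨g, hg⟩⟩ with hC
  have main : ∀ w (hw : w < m + C.size), C.wire x w hw = N.wire x w := by
    intro w
    induction w using Nat.strong_induction_on with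
    | _ w ih =>
      intro hw
      by_cases hm : w < m
      · rw [Circuit.wire.eq_def, Net.wire_input N x w hm]
        simp [hm]
      · have hgw : w - m < N.size := by simp only [hC] at hw; omega
        have hv := hV (w - m) hgw
        have h1 : (N.gate (w - m)).2.1 < w := by omega
        have h2 : (N.gate (w - m)).2.2 < w := by omega
        rw [Circuit.wire.eq_def, Net.wire_gate N x w (by omega) h1 h2]
        simp only [hm, dif_neg, not_false_iff]
        have e1 : C.wire x (N.gate (w - m)).2.1 (by simp only [hC]; omega)
            = N.wire x (N.gate (w - m)).2.1 := ih _ h1 _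
        have e2 : C.wire x (N.gate (w - m)).2.2 (by simp only [hC]; omega)
            = N.wire x (N.gate (w - m)).2.2 := ih _ h2 _
        cases hl : (N.gate (w - m)).1 <;>
          simp only [hC, gle, hl] <;> simp only [← hC] <;> rw [e1] <;> rw [e2] <;>
            rw [show C.label ⟨w - m, hgw⟩ = (N.gate (w - m)).1 from rfl, hl]
  exact main (m + g) (by simp only [hC]; omega)

end PS

namespace PS

lemma constNet {m : ℕ} (hm : 0 < m) :
    ∃ (N : Net m) (tw fw : ℕ), N.Valid ∧ N.size = 3 ∧ tw < m + N.size ∧ fw < m + N.size ∧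
      (∀ x, N.wire x tw = true) ∧ (∀ x, N.wire x fw = false) := by
  set N0 : Net m := ⟨0, fun _ => (.not, 0, 0)⟩ with hN0
  have hV0 : N0.Valid := fun g hg => by simp [hN0] at hg
  set P1 := N0.push (.not, 0, 0) with hP1
  set P2 := P1.push (.and, 0, m) with hP2
  set P3 := P2.push (.not, m + 1, m + 1) with hP3
  have s1 : P1.size = 1 := rfl
  have s2 : P2.size = 2 := rfl
  have s3 : P3.size = 3 := rfl
  have hV1 : P1.Valid := valid_push hV0 (by simp [hN0]; omega) (by simp [hN0]; omega)
  have hV2 : P2.Valid := valid_push hV1 (by omega) (by omega)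
  have hV3 : P3.Valid := valid_push hV2 (by omega) (by omega)
  have e1 : Extends P1 P2 := extends_push _ _
  have e2 : Extends P2 P3 := extends_push _ _
  have w1 : ∀ x, P1.wire x m = !(x ⟨0, hm⟩) := by
    intro x
    have h := wire_push_new N0 .not 0 0 (by simp [hN0]; omega) (by simp [hN0]; omega) x
    simp only [hN0] at h
    rw [show m + (0:ℕ) = m from rfl] at h
    rw [h, Net.wire_input _ x 0 hm]; rfl
  have w2 : ∀ x, P2.wire x (m + 1) = false := by
    intro x
    have h := wire_push_new P1 .and 0 m (by omega) (by omega) x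
    rw [s1] at h
    rw [h, w1, Net.wire_input _ x 0 hm]
    simp [gle]
  have w3 : ∀ x, P3.wire x (m + 2) = true := by
    intro x
    have h := wire_push_new P2 .not (m + 1) (m + 1) (by omega) (by omega) x
    rw [s2] at h
    rw [h, w2]; rfl
  refine ⟨P3, m + 2, m + 1, hV3, s3, by omega, by omega, w3, fun x => ?_⟩
  rw [wire_extends e2 x (m + 1) (by omega), w2]

lemma buildMany {m : ℕ} (c : ℕ) (F : Fin c → (Fin m → Bool) → Bool) (S : ℕ)
    (N : Net m) (hV : N.Valid)
    (h : ∀ N1 : Net m, N1.Valid → Extends N N1 → ∀ i : Fin c,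
      ∃ (N2 : Net m) (o : ℕ), N2.Valid ∧ Extends N1 N2 ∧ N2.size ≤ N1.size + S ∧
        o < m + N2.size ∧ ∀ x, N2.wire x o = F i x) :
    ∃ (N' : Net m) (ws : Fin c → ℕ), N'.Valid ∧ Extends N N' ∧ N'.size ≤ N.size + c * S ∧
      ∀ i, ws i < m + N'.size ∧ ∀ x, N'.wire x (ws i) = F i x := by
  induction c generalizing N with
  | zero =>
    exact ⟨N, fun i => i.elim0, hV, Extends.refl N, by omega, fun i => i.elim0⟩
  | succ c ih =>
    obtain ⟨N2, o, hV2, ext2, sz2, ho, spec⟩ := h N hV (Extends.refl N) 0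
    obtain ⟨N', ws', hV', ext', sz', spec'⟩ := ih (fun i => F i.succ) N2 hV2
      (fun N1 hV1 e i => h N1 hV1 (ext2.trans e) i.succ)
    have hmul : (c + 1) * S = c * S + S := by ring
    refine ⟨N', Fin.cons o ws', hV', ext2.trans ext', by omega, fun i => ?_⟩
    refine Fin.cases ?_ (fun j => ?_) i
    · have hsz : N2.size ≤ N'.size := ext'.1
      refine ⟨by simp only [Fin.cons_zero]; omega, fun x => ?_⟩
      simp only [Fin.cons_zero]
      rw [wire_extends ext' x o ho, spec]
    · simpa using spec' j

end PS

namespace PS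

lemma rmap_len (n : ℕ) (f : Fin n → ℕ) : ((List.finRange n).map f).length = n := by simp

lemma rmap_get (n : ℕ) (f : Fin n → ℕ) (i : Fin ((List.finRange n).map f).length) :
    ((List.finRange n).map f).get i = f ⟨i.1, by simpa using i.2⟩ := by
  simp [List.get_eq_getElem]

lemma rmap_mem {n : ℕ} {f : Fin n → ℕ} {M : ℕ} (hb : ∀ i, f i < M) :
    ∀ w ∈ (List.finRange n).map f, w < M := by
  intro w hw
  simp only [List.mem_map, List.mem_finRange, true_and] at hw
  obtain ⟨i, rfl⟩ := hw
  exact hb i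

lemma cond_lt {c : Bool} {a b M : ℕ} (h1 : a < M) (h2 : b < M) : cond c a b < M := by
  cases c
  · simpa using h2
  · simpa using h1

lemma selectFin {m : ℕ} (n : ℕ) (f : Fin n → ℕ) (N : Net m) (hV : N.Valid)
    (hflt : ∀ i, f i < m + N.size) (L : (Fin n → Bool) → ℕ) (hL : ∀ v, L v < m + N.size) :
    ∃ (N' : Net m) (o : ℕ), N'.Valid ∧ Extends N N' ∧
      N'.size + 4 ≤ N.size + 4 * 2 ^ n ∧ o < m + N'.size ∧
      ∀ x, N'.wire x o = N.wire x (L (fun i => N.wire x (f i))) := by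
  obtain ⟨N', o, h1, h2, h3, h4, h5⟩ := select ((List.finRange n).map f) N hV
    (rmap_mem hflt) (fun v => L (fun i => v (Fin.cast (rmap_len n f).symm i)))
    (fun v => hL _)
  refine ⟨N', o, h1, h2, by rwa [rmap_len] at h3, h4, fun x => ?_⟩
  rw [h5]
  congr 1
  congr 1
  funext i
  show N.wire x (((List.finRange n).map f).get (Fin.cast (rmap_len n f).symm i)) = N.wire x (f i)
  rw [rmap_get]
  exact congrArg (fun w => N.wire x w) (congrArg f (Fin.ext rfl))

end PS


lemma joinInput_left {n : ℕ} (x y : Fin n → Bool) (i : Fin n) (h : (i : ℕ) < 2 * n) :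
    joinInput x y ⟨(i : ℕ), h⟩ = x i := by
  have h2 : (i : ℕ) < n := i.2
  simp [joinInput, h2]

lemma joinInput_right {n : ℕ} (x y : Fin n → Bool) (i : Fin n) (h : n + (i : ℕ) < 2 * n) :
    joinInput x y ⟨n + (i : ℕ), h⟩ = y i := by
  have hni : ¬ (n + (i : ℕ) < n) := by omega
  simp [joinInput, hni, Nat.add_sub_cancel_left]

set_option maxHeartbeats 2000000 in
open PS in
/-- There is an absolute constant `c` such that for all `n ≥ 1`, `b ≥ 2`, `k ≥ 1`, every
function `f : {0,1}^n × {0,1}^n → {0,1}` admitting a `(b, k)` bit-probe scheme is computed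
by a Boolean circuit with `2n` inputs of size at most
`c · (2^n · k · log₂ b + 2^n · b + 2^k · 2^n)`. -/
theorem probe_scheme_to_circuit : ∃ c : ℝ, ∀ n b k : ℕ, 1 ≤ n → 2 ≤ b → 1 ≤ k →
    ∀ f : (Fin n → Bool) × (Fin n → Bool) → Bool, HasProbeScheme b k f →
      ∃ C : Circuit (2 * n),
        (C.size : ℝ) ≤ c * ((2 : ℝ) ^ n * k * Real.logb 2 b + 2 ^ n * b + 2 ^ k * 2 ^ n) ∧
        ∀ x y : Fin n → Bool, C.eval (joinInput x y) = f (x, y) := by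
  classical
  refine ⟨12, ?_⟩
  intro n b k hn hb hk f hsch
  obtain ⟨G, H, φ, hf⟩ := hsch
  obtain ⟨Nc, tw, fw, hVc, szc, htw, hfw, wtw, wfw⟩ := constNet (show 0 < 2 * n by omega)
  set e2n : (Fin n → Bool) ≃ Fin (2 ^ n) := Fintype.equivFinOfCardEq (by simp) with he2n
  set xp : (Fin (2 * n) → Bool) → (Fin n → Bool) :=
    fun z i => z ⟨i.1, by have := i.2; omega⟩ with hxp
  set yp : (Fin (2 * n) → Bool) → (Fin n → Bool) :=
    fun z i => z ⟨n + i.1, by have := i.2; omega⟩ with hyp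
  -- Step 1: the bits of the encoding G
  obtain ⟨Ng, gws, hVg, extg, szg, specg⟩ := buildMany b
    (fun i z => G (xp z) i) (4 * 2 ^ n) Nc hVc (fun N1 hV1 e i => by
      obtain ⟨N2, o, h1, h2, h3, h4, h5⟩ := selectFin n (fun i0 => (i0 : ℕ)) N1 hV1
        (fun i0 => by show (i0 : ℕ) < 2 * n + N1.size; have := i0.2; have := e.1; omega)
        (fun v => cond (G v i) tw fw)
        (fun v => cond_lt (lt_of_lt_of_le htw (by have := e.1; omega))
          (lt_of_lt_of_le hfw (by have := e.1; omega)))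
      refine ⟨N2, o, h1, h2, by omega, h4, fun z => ?_⟩
      rw [h5]
      have hv : (fun i0 : Fin n => N1.wire z ((i0 : ℕ))) = xp z := by
        funext i0
        rw [Net.wire_input _ _ _ (by have := i0.2; omega)]
      rw [hv]
      have ec : Extends Nc N1 := e
      cases hG : G (xp z) i <;> simp only [hG, cond]
      · rw [wire_extends ec z fw (lt_of_lt_of_le hfw (by have := ec.1; omega)), wfw z]
      · rw [wire_extends ec z tw (lt_of_lt_of_le htw (by have := ec.1; omega)), wtw z])
  -- Step 2: the probed bits
  obtain ⟨Nz, zws, hVz, extz, szz, specz⟩ := buildMany k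
    (fun j z => G (xp z) (H (yp z) j)) (4 * 2 ^ n) Ng hVg (fun N1 hV1 e j => by
      obtain ⟨N2, o, h1, h2, h3, h4, h5⟩ := selectFin n (fun i0 => n + (i0 : ℕ)) N1 hV1
        (fun i0 => by show n + (i0 : ℕ) < 2 * n + N1.size; have := i0.2; have := e.1; omega)
        (fun v => gws (H v j))
        (fun v => lt_of_lt_of_le (specg (H v j)).1 (by have := e.1; omega))
      refine ⟨N2, o, h1, h2, by omega, h4, fun z => ?_⟩
      rw [h5]
      have hv : (fun i0 : Fin n => N1.wire z (n + (i0 : ℕ))) = yp z := by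
        funext i0
        rw [Net.wire_input _ _ _ (by have := i0.2; omega)]
      rw [hv, wire_extends e z _ (specg (H (yp z) j)).1]
      exact (specg (H (yp z) j)).2 z)
  -- Step 3: the decoded answers, for each query
  obtain ⟨Nd, dws, hVd, extd, szd, specd⟩ := buildMany (2 ^ n)
    (fun i z => φ (fun j => G (xp z) (H (yp z) j)) (e2n.symm i)) (4 * 2 ^ k) Nz hVz
    (fun N1 hV1 e i => by
      have ec : Extends Nc N1 := (extg.trans extz).trans e
      obtain ⟨N2, o, h1, h2, h3, h4, h5⟩ := selectFin k (fun j => zws j) N1 hV1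
        (fun j => lt_of_lt_of_le (specz j).1 (by have := e.1; omega))
        (fun v => cond (φ v (e2n.symm i)) tw fw)
        (fun v => cond_lt (lt_of_lt_of_le htw (by have := ec.1; omega))
          (lt_of_lt_of_le hfw (by have := ec.1; omega)))
      refine ⟨N2, o, h1, h2, by omega, h4, fun z => ?_⟩
      rw [h5]
      have hv : (fun j : Fin k => N1.wire z (zws j))
          = (fun j => G (xp z) (H (yp z) j)) := by
        funext j
        rw [wire_extends e z _ (specz j).1]
        exact (specz j).2 z
      rw [hv]
      cases hφ : φ (fun j => G (xp z) (H (yp z) j)) (e2n.symm i) <;> simp only [hφ, cond]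
      · rw [wire_extends ec z fw (lt_of_lt_of_le hfw (by have := ec.1; omega)), wfw z]
      · rw [wire_extends ec z tw (lt_of_lt_of_le htw (by have := ec.1; omega)), wtw z])
  -- Step 4: final selection over the query
  obtain ⟨Nf, of, hVf, extf, szf, hof, specf⟩ := selectFin n (fun i0 => n + (i0 : ℕ)) Nd hVd
    (fun i0 => by show n + (i0 : ℕ) < 2 * n + Nd.size; have := i0.2; omega)
    (fun v => dws (e2n v))
    (fun v => (specd (e2n v)).1)
  -- Final output gate
  set Np := Nf.push (.and, of, of) with hNp
  have hVp : Np.Valid := valid_push hVf hof hof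
  have wp : ∀ z, Np.wire z (2 * n + Nf.size) = Nf.wire z of := by
    intro z
    rw [hNp, wire_push_new Nf .and of of hof hof z]
    exact Bool.and_self _
  obtain ⟨C, hCsz, hCeval⟩ := toCircuit Np hVp Nf.size (Nat.lt_succ_self _)
  have hCsz' : C.size = Nf.size + 1 := by rw [hCsz, hNp]; rfl
  refine ⟨C, ?_, fun x y => ?_⟩
  · -- size bound
    have hnat : C.size ≤ 4 + 4 * 2 ^ n * (b + k + 2 ^ k + 1) := by nlinarith [szg, szz, szd, szf, szc, hCsz']
    have hnat2 : 4 + 4 * 2 ^ n * (b + k + 2 ^ k + 1)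
        ≤ 12 * (2 ^ n * k + 2 ^ n * b + 2 ^ k * 2 ^ n) := by
      have h1 : 1 ≤ 2 ^ n := Nat.one_le_two_pow
      have h2 : 1 ≤ 2 ^ k := Nat.one_le_two_pow
      nlinarith
    have hb1 : (1 : ℝ) ≤ Real.logb 2 b := by
      rw [show (1 : ℝ) = Real.logb 2 2 by simp]
      exact Real.logb_le_logb_of_le (by norm_num) (by norm_num) (by exact_mod_cast hb)
    have hA : (0 : ℝ) ≤ (2 : ℝ) ^ n * k := by positivity
    calc (C.size : ℝ) ≤ ((12 * (2 ^ n * k + 2 ^ n * b + 2 ^ k * 2 ^ n) : ℕ) : ℝ) := by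
          exact_mod_cast le_trans hnat hnat2
      _ = 12 * ((2 : ℝ) ^ n * k + 2 ^ n * b + 2 ^ k * 2 ^ n) := by push_cast; ring
      _ ≤ 12 * ((2 : ℝ) ^ n * k * Real.logb 2 b + 2 ^ n * b + 2 ^ k * 2 ^ n) := by
          nlinarith [hb1, hA]
  · -- correctness
    have hxpJ : xp (joinInput x y) = x :=
      funext fun i => joinInput_left x y i (by have := i.2; omega)
    have hypJ : yp (joinInput x y) = y :=
      funext fun i => joinInput_right x y i (by have := i.2; omega)
    have hv : (fun i0 : Fin n => Nd.wire (joinInput x y) (n + (i0 : ℕ))) = y := by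
      funext i0
      rw [Net.wire_input _ _ _ (by have := i0.2; omega)]
      exact congrFun hypJ i0
    rw [hCeval, wp, specf (joinInput x y)]
    rw [hv, (specd (e2n y)).2 (joinInput x y)]
    simp only [Equiv.symm_apply_apply, hxpJ, hypJ]
    exact (hf x y).symm
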